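/- For t ≥ 0, the split graph SP^t satisfies λ₂(SP^t) ≤ λ₂(SP^{t+1}), i.e., the sequence (λ₂(SP^t)) is non-decreasing in t. -/

import Mathlib

open Real

/-- The `k`-th largest eigenvalue (1-indexed, with multiplicity) of a real
symmetric matrix; junk value `0` if the matrix is not Hermitian. -/
noncomputable def kthLargestEig {V : Type*} [Fintype V] [DecidableEq V]
    (k : ℕ) (A : Matrix V V ℝ) : ℝ :=
  if h : A.IsHermitian then
    ((Finset.univ.val.map h.eigenvalues).sort (· ≤ ·)).getD (Fintype.card V - k) 0
  else 0

/-- The second largest eigenvalue of a real symmetric matrix. -/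
noncomputable def lambda2 {V : Type*} [Fintype V] [DecidableEq V]
    (A : Matrix V V ℝ) : ℝ := kthLargestEig 2 A

/-- The distance matrix of a graph (entries are graph distances, as reals). -/
noncomputable def distMatrix {V : Type*} [Fintype V] (G : SimpleGraph V) :
    Matrix V V ℝ := fun u v => (G.dist u v : ℝ)

/-- A graph is chordal if every cycle of length at least 4 has a chord, i.e. an
edge of the graph joining two vertices of the cycle that is not a cycle edge. -/
def SimpleGraph.Chordal {V : Type*} (G : SimpleGraph V) : Prop :=
  ∀ (u : V) (w : G.Walk u u), w.IsCycle → 4 ≤ w.length →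
    ∃ x y, x ∈ w.support ∧ y ∈ w.support ∧ G.Adj x y ∧ s(x, y) ∉ w.edges

/-- The split graph `SP^t`: a clique `K₄` on vertices `0 = u, 1 = v, 2, 3`,
a vertex `4 = w` adjacent exactly to `u` and `v`, and `t` pendant vertices
`5, …, t+4` each adjacent only to `u`. -/
def SP (t : ℕ) : SimpleGraph (Fin (t + 5)) where
  Adj x y := x ≠ y ∧
    (((x : ℕ) < 4 ∧ (y : ℕ) < 4) ∨
      ((x : ℕ) = 4 ∧ (y : ℕ) < 2) ∨ ((y : ℕ) = 4 ∧ (x : ℕ) < 2) ∨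
      ((x : ℕ) = 0 ∧ 5 ≤ (y : ℕ)) ∨ ((y : ℕ) = 0 ∧ 5 ≤ (x : ℕ)))
  symm := by
    constructor
    intro x y h
    exact ⟨h.1.symm, by tauto⟩
  loopless := by
    constructor
    intro x h
    exact h.1 rfl

open Matrix

section Aux

lemma sorted_facts {n : ℕ} (hn : 2 ≤ n) (μ : Fin n → ℝ) :
    ∃ i₀ : Fin n,
      (∀ j, μ j ≤ μ i₀) ∧
      (∀ j, j ≠ i₀ → μ j ≤ ((Finset.univ.val.map μ).sort (· ≤ ·)).getD (n - 2) 0) ∧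
      ∃ p, p ≠ i₀ ∧ ((Finset.univ.val.map μ).sort (· ≤ ·)).getD (n - 2) 0 ≤ μ p := by
  classical
  set m : Multiset ℝ := Finset.univ.val.map μ with hm
  set L : List ℝ := m.sort (· ≤ ·) with hLdef
  have hlen : L.length = n := by simp [hLdef, hm]
  have hsort : L.Pairwise (· ≤ ·) := Multiset.pairwise_sort _ _
  have hLm : (L : Multiset ℝ) = m := Multiset.sort_eq _ _
  have hmemL : ∀ a : ℝ, a ∈ L ↔ a ∈ m := by intro a; rw [← hLm]; simp
  have hLne : L ≠ [] := by
    intro h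
    rw [h] at hlen; simp at hlen; omega
  set lam1 : ℝ := L.getLast hLne with hlam1
  set lam2 : ℝ := L.getD (n - 2) 0 with hlam2
  have h2 : lam2 = L[n-2]'(by omega) := by
    rw [hlam2, List.getD_eq_getElem _ _ (by omega)]
  have hlast : lam1 = L[n-1]'(by omega) := by
    rw [hlam1, List.getLast_eq_getElem]; congr 1; omega
  have hmono : ∀ (i j : ℕ) (hi : i < L.length) (hj : j < L.length), i ≤ j →
      L[i] ≤ L[j] := by
    intro i j hi hj hij
    rcases eq_or_lt_of_le hij with h | h
    · subst h; rfl
    · exact hsort.rel_get_of_lt (a := ⟨i, hi⟩) (b := ⟨j, hj⟩) h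
  have hle_lam1 : ∀ a ∈ L, a ≤ lam1 := by
    intro a ha
    obtain ⟨k, hk, hak⟩ := List.mem_iff_getElem.mp ha
    rw [← hak, hlast]
    exact hmono _ _ hk (by omega) (by omega)
  have hlam1m : lam1 ∈ m := by rw [← hmemL, hlast]; exact List.getElem_mem _
  obtain ⟨i₀, -, hi₀⟩ := Multiset.mem_map.mp hlam1m
  have huniv : (Finset.univ.val : Multiset (Fin n)) = i₀ ::ₘ Finset.univ.val.erase i₀ :=
    (Multiset.cons_erase (by simp)).symm
  have hmsplit : m = μ i₀ ::ₘ (Finset.univ.val.erase i₀).map μ := by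
    conv_lhs => rw [hm, huniv]
    rw [Multiset.map_cons]
  have herase : m.erase lam1 = (Finset.univ.val.erase i₀).map μ := by
    rw [hmsplit, ← hi₀, Multiset.erase_cons_head]
  have hsplitL : m = lam1 ::ₘ (L.dropLast : Multiset ℝ) := by
    rw [← hLm]
    conv_lhs => rw [← List.dropLast_append_getLast hLne]
    simp [add_comm, Multiset.singleton_add, hlam1]
  have herase2 : m.erase lam1 = (L.dropLast : Multiset ℝ) := by
    rw [hsplitL, Multiset.erase_cons_head]
  have hdroplen : L.dropLast.length = n - 1 := by simp [hlen]
  have hdrop_le : ∀ a ∈ L.dropLast, a ≤ lam2 := by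
    intro a ha
    obtain ⟨k, hk, hak⟩ := List.mem_iff_getElem.mp ha
    rw [← hak, List.getElem_dropLast, h2]
    exact hmono _ _ (by omega) (by omega) (by omega)
  refine ⟨i₀, ?_, ?_, ?_⟩
  · intro j
    have : μ j ∈ L := (hmemL _).mpr (Multiset.mem_map_of_mem μ (by simp))
    rw [hi₀]; exact hle_lam1 _ this
  · intro j hj
    have hj' : j ∈ Finset.univ.val.erase i₀ :=
      (Multiset.mem_erase_of_ne hj).mpr (by simp)
    have : μ j ∈ (L.dropLast : Multiset ℝ) := by
      rw [← herase2, herase]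
      exact Multiset.mem_map_of_mem μ hj'
    exact hdrop_le _ (by exact_mod_cast this)
  · have hlam2mem : lam2 ∈ L.dropLast := by
      have : lam2 = L.dropLast[n-2]'(by omega) := by
        rw [h2, List.getElem_dropLast]
      rw [this]; exact List.getElem_mem _
    have : lam2 ∈ (Finset.univ.val.erase i₀).map μ := by
      rw [← herase, herase2]; exact_mod_cast hlam2mem
    obtain ⟨p, hp, hpe⟩ := Multiset.mem_map.mp this
    refine ⟨p, ?_, le_of_eq hpe.symm⟩
    intro h
    subst h
    exact (Finset.univ.nodup).notMem_erase hp

lemma quad_repr {n : Type*} [Fintype n] [DecidableEq n]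
    {A : Matrix n n ℝ} (hA : A.IsHermitian) (x : n → ℝ) :
    x ⬝ᵥ (A *ᵥ x) =
      ∑ i, hA.eigenvalues i * ((star (hA.eigenvectorUnitary : Matrix n n ℝ) *ᵥ x) i)^2 ∧
    x ⬝ᵥ x = ∑ i, ((star (hA.eigenvectorUnitary : Matrix n n ℝ) *ᵥ x) i)^2 := by
  set U : Matrix n n ℝ := (hA.eigenvectorUnitary : Matrix n n ℝ) with hU
  have hU1 : U * star U = 1 := Matrix.mem_unitaryGroup_iff.mp hA.eigenvectorUnitary.2
  have hU2 : star U * U = 1 := Matrix.mem_unitaryGroup_iff'.mp hA.eigenvectorUnitary.2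
  set y : n → ℝ := star U *ᵥ x with hy
  have hdot : ∀ z : n → ℝ, x ⬝ᵥ (U *ᵥ z) = y ⬝ᵥ z := by
    intro z
    rw [hy, Matrix.dotProduct_mulVec]
    congr 1
    rw [star_eq_conjTranspose, Matrix.conjTranspose_eq_transpose_of_trivial,
      Matrix.mulVec_transpose]
  constructor
  · conv_lhs => rw [hA.spectral_theorem, Unitary.conjStarAlgAut_apply]
    rw [← Matrix.mulVec_mulVec, ← Matrix.mulVec_mulVec, hdot]
    simp only [Matrix.mulVec_diagonal, dotProduct]
    refine Finset.sum_congr rfl fun i _ => ?_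
    simp [← hy]
    ring
  · have hx : x = U *ᵥ y := by
      rw [hy, Matrix.mulVec_mulVec, hU1, Matrix.one_mulVec]
    have hT : Uᵀ * U = 1 := by
      rw [← Matrix.conjTranspose_eq_transpose_of_trivial, ← star_eq_conjTranspose]
      exact hU2
    conv_lhs => rw [hx]
    rw [Matrix.dotProduct_mulVec, Matrix.vecMul_mulVec, hT, Matrix.vecMul_one]
    simp [dotProduct, pow_two]

lemma rayleigh_upper {n : Type*} [Fintype n] [DecidableEq n]
    {A : Matrix n n ℝ} (hA : A.IsHermitian) (c : ℝ) (i₀ : n)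
    (hb : ∀ j, j ≠ i₀ → hA.eigenvalues j ≤ c)
    (x : n → ℝ) (hx : (star (hA.eigenvectorUnitary : Matrix n n ℝ) *ᵥ x) i₀ = 0) :
    x ⬝ᵥ (A *ᵥ x) ≤ c * (x ⬝ᵥ x) := by
  obtain ⟨h1, h2⟩ := quad_repr hA x
  rw [h1, h2, Finset.mul_sum]
  apply Finset.sum_le_sum
  intro i _
  by_cases hi : i = i₀
  · subst hi; rw [hx]; simp
  · exact mul_le_mul_of_nonneg_right (hb i hi) (sq_nonneg _)

lemma rayleigh_lower {n : Type*} [Fintype n] [DecidableEq n]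
    {A : Matrix n n ℝ} (hA : A.IsHermitian) (c : ℝ) (p q : n) (hpq : p ≠ q)
    (hp : c ≤ hA.eigenvalues p) (hq : c ≤ hA.eigenvalues q) (α β : ℝ) :
    c * (((hA.eigenvectorUnitary : Matrix n n ℝ) *ᵥ (fun i => if i = p then α else if i = q then β else 0)) ⬝ᵥ
        ((hA.eigenvectorUnitary : Matrix n n ℝ) *ᵥ (fun i => if i = p then α else if i = q then β else 0))) ≤
      ((hA.eigenvectorUnitary : Matrix n n ℝ) *ᵥ (fun i => if i = p then α else if i = q then β else 0)) ⬝ᵥ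
        (A *ᵥ ((hA.eigenvectorUnitary : Matrix n n ℝ) *ᵥ (fun i => if i = p then α else if i = q then β else 0))) ∧
    ((hA.eigenvectorUnitary : Matrix n n ℝ) *ᵥ (fun i => if i = p then α else if i = q then β else 0)) ⬝ᵥ
        ((hA.eigenvectorUnitary : Matrix n n ℝ) *ᵥ (fun i => if i = p then α else if i = q then β else 0))
      = α^2 + β^2 := by
  set U : Matrix n n ℝ := (hA.eigenvectorUnitary : Matrix n n ℝ) with hU
  have hU2 : star U * U = 1 := Matrix.mem_unitaryGroup_iff'.mp hA.eigenvectorUnitary.2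
  set y : n → ℝ := fun i => if i = p then α else if i = q then β else 0 with hy
  set x : n → ℝ := U *ᵥ y with hxdef
  have hyx : star U *ᵥ x = y := by
    rw [hxdef, Matrix.mulVec_mulVec, hU2, Matrix.one_mulVec]
  obtain ⟨h1, h2⟩ := quad_repr hA x
  rw [hyx] at h1 h2
  have hsum : ∑ i, (y i)^2 = α^2 + β^2 := by
    have : ∀ i, (y i)^2 = α^2 * (if i = p then 1 else 0) + β^2 * (if i = q then 1 else 0) := by
      intro i
      rw [hy]
      by_cases hip : i = p
      · subst hip; simp [hpq]
      · by_cases hiq : i = q <;> simp [hip, hiq, Ne.symm hpq]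
    rw [Finset.sum_congr rfl fun i _ => this i]
    simp [Finset.sum_add_distrib, ← Finset.mul_sum]
  refine ⟨?_, by rw [h2, hsum]⟩
  rw [h1, h2, Finset.mul_sum]
  apply Finset.sum_le_sum
  intro i _
  by_cases hip : i = p
  · subst hip; exact mul_le_mul_of_nonneg_right hp (sq_nonneg _)
  · by_cases hiq : i = q
    · subst hiq; exact mul_le_mul_of_nonneg_right hq (sq_nonneg _)
    · have : y i = 0 := by rw [hy]; simp [hip, hiq]
      rw [this]; simp

lemma interlace2 {n : ℕ} (hn : 2 ≤ n) {B : Matrix (Fin (n+1)) (Fin (n+1)) ℝ} (hB : B.IsHermitian) :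
    lambda2 (B.submatrix Fin.castSucc Fin.castSucc) ≤ lambda2 B := by
  classical
  have hA : (B.submatrix Fin.castSucc Fin.castSucc).IsHermitian := hB.submatrix _
  set A := B.submatrix Fin.castSucc Fin.castSucc with hAdef
  rw [lambda2, lambda2, kthLargestEig, kthLargestEig, dif_pos hA, dif_pos hB]
  simp only [Fintype.card_fin]
  set lam2A := ((Finset.univ.val.map hA.eigenvalues).sort (· ≤ ·)).getD (n - 2) 0 with hl2A
  set lam2B := ((Finset.univ.val.map hB.eigenvalues).sort (· ≤ ·)).getD (n + 1 - 2) 0 with hl2B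
  obtain ⟨P, hPmax, -, Q, hQP, hQle⟩ := sorted_facts hn hA.eigenvalues
  have hPle : lam2A ≤ hA.eigenvalues P := hQle.trans (hPmax Q)
  obtain ⟨i₀, -, hbound, -⟩ := sorted_facts (by omega : 2 ≤ n + 1) hB.eigenvalues
  set UA : Matrix (Fin n) (Fin n) ℝ := (hA.eigenvectorUnitary : Matrix (Fin n) (Fin n) ℝ) with hUA
  set UB : Matrix (Fin (n+1)) (Fin (n+1)) ℝ := (hB.eigenvectorUnitary : Matrix (Fin (n+1)) (Fin (n+1)) ℝ) with hUB
  set g : Fin n → ℝ := fun i => UB (Fin.castSucc i) i₀ with hg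
  set h : Fin n → ℝ := fun j => ∑ i, g i * UA i j with hh
  set α : ℝ := if h P = 0 ∧ h Q = 0 then 1 else h Q with hα
  set β : ℝ := if h P = 0 ∧ h Q = 0 then 0 else - h P with hβ
  have hzero : h P * α + h Q * β = 0 := by
    by_cases hc : h P = 0 ∧ h Q = 0
    · simp [hα, hβ, hc]
    · simp only [hα, hβ, if_neg hc]; ring
  have hpos : 0 < α^2 + β^2 := by
    by_cases hc : h P = 0 ∧ h Q = 0
    · simp [hα, hβ, hc]
    · rcases not_and_or.mp hc with h1 | h1
      · have : 0 < (h P)^2 := by positivity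
        simp only [hα, hβ, if_neg hc]
        nlinarith [sq_nonneg (h Q)]
      · have : 0 < (h Q)^2 := by positivity
        simp only [hα, hβ, if_neg hc]
        nlinarith [sq_nonneg (h P)]
  set y' : Fin n → ℝ := fun i => if i = P then α else if i = Q then β else 0 with hy'
  set x' : Fin n → ℝ := UA *ᵥ y' with hx'
  set x : Fin (n+1) → ℝ := Fin.snoc x' 0 with hx
  have key : ∀ h' : Fin n → ℝ, ∑ j, h' j * y' j = h' P * α + h' Q * β := by
    intro h'
    have step : ∀ j, h' j * y' j =
        (h' P * α) * (if j = P then 1 else 0) + (h' Q * β) * (if j = Q then 1 else 0) := by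
      intro j
      by_cases hjP : j = P
      · subst hjP; simp [hy', Ne.symm hQP]
      · by_cases hjQ : j = Q <;> simp [hy', hjP, hjQ, hQP]
    rw [Finset.sum_congr rfl fun j _ => step j]
    simp [Finset.sum_add_distrib, ← Finset.mul_sum]
  have hperp : (star UB *ᵥ x) i₀ = 0 := by
    have e1 : (star UB *ᵥ x) i₀ = ∑ k, UB k i₀ * x k := by
      simp [Matrix.mulVec, dotProduct, Matrix.star_apply]
    rw [e1, Fin.sum_univ_castSucc]
    simp only [hx, Fin.snoc_castSucc, Fin.snoc_last, mul_zero, add_zero]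
    have e2 : ∑ i, UB (Fin.castSucc i) i₀ * x' i = ∑ j, h j * y' j := by
      simp only [hx', Matrix.mulVec, dotProduct, hh, Finset.mul_sum, Finset.sum_mul]
      rw [Finset.sum_comm]
      refine Finset.sum_congr rfl fun j _ => Finset.sum_congr rfl fun i _ => by ring
    rw [e2, key, hzero]
  have hxx : x ⬝ᵥ x = x' ⬝ᵥ x' := by
    simp only [dotProduct]
    rw [Fin.sum_univ_castSucc]
    simp [hx, Fin.snoc_castSucc, Fin.snoc_last]
  have hxBx : x ⬝ᵥ (B *ᵥ x) = x' ⬝ᵥ (A *ᵥ x') := by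
    simp only [dotProduct, Matrix.mulVec]
    rw [Fin.sum_univ_castSucc]
    simp only [hx, Fin.snoc_castSucc, Fin.snoc_last, zero_mul, add_zero]
    refine Finset.sum_congr rfl fun i _ => ?_
    congr 1
    rw [Fin.sum_univ_castSucc]
    simp [hAdef, Matrix.submatrix_apply, Fin.snoc_castSucc, Fin.snoc_last]
  have hup : x ⬝ᵥ (B *ᵥ x) ≤ lam2B * (x ⬝ᵥ x) :=
    rayleigh_upper hB lam2B i₀ hbound x hperp
  obtain ⟨hlo, hnorm⟩ := rayleigh_lower hA lam2A P Q (Ne.symm hQP) hPle hQle α β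
  rw [← hy'] at hlo hnorm
  rw [← hx'] at hlo hnorm
  have chain : lam2A * (α^2 + β^2) ≤ lam2B * (α^2 + β^2) := by
    calc lam2A * (α^2 + β^2) = lam2A * (x' ⬝ᵥ x') := by rw [hnorm]
    _ ≤ x' ⬝ᵥ (A *ᵥ x') := hlo
    _ = x ⬝ᵥ (B *ᵥ x) := hxBx.symm
    _ ≤ lam2B * (x ⬝ᵥ x) := hup
    _ = lam2B * (α^2 + β^2) := by rw [hxx, hnorm]
  exact le_of_mul_le_mul_right (by linarith [chain]) hpos

lemma SP_adj_zero {t : ℕ} {y : Fin (t + 5)} (hy : y ≠ 0) : (SP t).Adj 0 y := by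
  refine ⟨hy.symm, ?_⟩
  have h0 : ((0 : Fin (t + 5)) : ℕ) = 0 := rfl
  have hyv : (y : ℕ) ≠ 0 := by
    intro h
    exact hy (Fin.ext (by simp [h0, h]))
  have hlt : (y : ℕ) < t + 5 := y.isLt
  rw [h0]
  omega

lemma SP_dist_two {t : ℕ} (x y : Fin (t + 5)) (hxy : x ≠ y) (hadj : ¬ (SP t).Adj x y) :
    (SP t).dist x y = 2 := by
  have hx0 : x ≠ 0 := by
    intro h; subst h; exact hadj (SP_adj_zero (Ne.symm hxy))
  have hy0 : y ≠ 0 := by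
    intro h; subst h
    exact hadj ((SP_adj_zero hx0).symm)
  have hreach : (SP t).Reachable x y :=
    ⟨SimpleGraph.Walk.cons ((SP_adj_zero hx0).symm)
      (SimpleGraph.Walk.cons (SP_adj_zero hy0) SimpleGraph.Walk.nil)⟩
  have hle : (SP t).dist x y ≤ 2 := SimpleGraph.dist_le
    (SimpleGraph.Walk.cons ((SP_adj_zero hx0).symm)
      (SimpleGraph.Walk.cons (SP_adj_zero hy0) SimpleGraph.Walk.nil))
  have hne0 : (SP t).dist x y ≠ 0 := by
    intro h
    rcases SimpleGraph.dist_eq_zero_iff_eq_or_not_reachable.mp h with h | h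
    · exact hxy h
    · exact h hreach
  have hne1 : (SP t).dist x y ≠ 1 := fun h => hadj (SimpleGraph.dist_eq_one_iff_adj.mp h)
  omega

lemma SP_adj_castSucc {t : ℕ} (x y : Fin (t + 5)) :
    (SP (t + 1)).Adj x.castSucc y.castSucc ↔ (SP t).Adj x y := by
  show (x.castSucc ≠ y.castSucc ∧ _) ↔ (x ≠ y ∧ _)
  simp only [Fin.coe_castSucc, ne_eq, Fin.castSucc_inj]

lemma distMatrix_isHermitian {V : Type*} [Fintype V] (G : SimpleGraph V) :
    (distMatrix G).IsHermitian := by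
  show (distMatrix G)ᴴ = distMatrix G
  ext i j
  simp [Matrix.conjTranspose_apply, distMatrix, SimpleGraph.dist_comm]

lemma SP_submatrix (t : ℕ) :
    (distMatrix (SP (t + 1))).submatrix Fin.castSucc Fin.castSucc = distMatrix (SP t) := by
  ext x y
  simp only [Matrix.submatrix_apply, distMatrix]
  norm_cast
  by_cases hxy : x = y
  · subst hxy; rw [SimpleGraph.dist_self, SimpleGraph.dist_self]
  · have hxy' : (x.castSucc : Fin (t + 1 + 5)) ≠ y.castSucc := by
      simpa [Fin.castSucc_inj] using hxy
    by_cases hadj : (SP t).Adj x y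
    · rw [SimpleGraph.dist_eq_one_iff_adj.mpr hadj,
        SimpleGraph.dist_eq_one_iff_adj.mpr ((SP_adj_castSucc x y).mpr hadj)]
    · rw [SP_dist_two x y hxy hadj,
        SP_dist_two (t := t + 1) x.castSucc y.castSucc hxy'
          (fun hc => hadj ((SP_adj_castSucc x y).mp hc))]

end Aux

theorem lambda2_SP_monotone (t : ℕ) :
    lambda2 (distMatrix (SP t)) ≤ lambda2 (distMatrix (SP (t + 1))) := by
  have hB : (distMatrix (SP (t + 1))).IsHermitian := distMatrix_isHermitian _
  calc lambda2 (distMatrix (SP t))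
      = lambda2 ((distMatrix (SP (t + 1))).submatrix Fin.castSucc Fin.castSucc) := by
        rw [SP_submatrix t]
    _ ≤ lambda2 (distMatrix (SP (t + 1))) := interlace2 (n := t + 5) (by omega) hB
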